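/- For every nonempty finite linearly ordered set I, the canonical adjunction map I → I** is an isomorphism of ordered sets, where I* = Hom_{Δ_big}(I,{0,1}) with pointwise order and I** = Hom_{∇}(I*,{0,1}) (nondecreasing maps preserving min and max), the map sending i ∈ I to evaluation at i. -/

import Mathlib

/-!
STATEMENT 1: For every nonempty finite linearly ordered set `I`, the canonical
map `I → I**` is an isomorphism of ordered sets, where `I* = Hom_{Δ_big}(I, {0,1})`
(nondecreasing maps into `Fin 2`, ordered pointwise; its minimal element is the
constant-`0` map and its maximal element is the constant-`1` map) and
`I** = Hom_∇(I*, {0,1})` (nondecreasing maps preserving min and max).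
The canonical map sends `i` to evaluation at `i`.
-/

open OrderHom

/-- The constant `0` map, the minimal element of `I* = I →o Fin 2`. -/
def constZero (I : Type*) [Preorder I] : I →o Fin 2 := ⟨fun _ => 0, monotone_const⟩

/-- The constant `1` map, the maximal element of `I* = I →o Fin 2`. -/
def constOne (I : Type*) [Preorder I] : I →o Fin 2 := ⟨fun _ => 1, monotone_const⟩

/-- `I** `: nondecreasing maps `I* → Fin 2` preserving the minimal and maximal
elements (which are the constant maps `0` and `1`). -/
def DoubleStar (I : Type*) [Preorder I] : Type _ :=
  {g : (I →o Fin 2) → Fin 2 //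
    Monotone g ∧ g (constZero I) = 0 ∧ g (constOne I) = 1}

instance (I : Type*) [Preorder I] : Preorder (DoubleStar I) :=
  Subtype.preorder _

/-- The canonical map `I → I**`, sending `i` to evaluation at `i`. -/
def evalMap (I : Type*) [Preorder I] (i : I) : DoubleStar I :=
  ⟨fun f => f i, fun _ _ h => h i, rfl, rfl⟩

/-- Threshold map: `1` on `{x | i ≤ x}`, `0` elsewhere. -/
lemma thresh_mono {I : Type*} [LinearOrder I] (i : I) :
    Monotone (fun x : I => (if i ≤ x then 1 else 0 : Fin 2)) := fun x y hxy => by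
    by_cases h : i ≤ x
    · simp [h, le_trans h hxy]
    · simp [h]

def thresh {I : Type*} [LinearOrder I] (i : I) : I →o Fin 2 :=
  ⟨fun x => if i ≤ x then 1 else 0, thresh_mono i⟩

lemma fin2_cases (a : Fin 2) : a = 0 ∨ a = 1 := by omega

lemma fin2_le_one (a : Fin 2) : a ≤ 1 := by omega

lemma fin2_zero_le (a : Fin 2) : 0 ≤ a := by omega

theorem evalMap_isOrderIso (I : Type*) [LinearOrder I] [Fintype I] [Nonempty I] :
    Function.Bijective (evalMap I) ∧ ∀ i j : I, i ≤ j ↔ evalMap I i ≤ evalMap I j := by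
  have hord : ∀ i j : I, i ≤ j ↔ evalMap I i ≤ evalMap I j := by
    intro i j
    constructor
    · intro h f
      exact f.monotone h
    · intro h
      by_contra hij
      have hji : j < i := lt_of_not_ge hij
      have := h (thresh i)
      simp only [evalMap, thresh, OrderHom.coe_mk] at this
      rw [if_pos le_rfl, if_neg (not_le_of_gt hji)] at this
      omega
  refine ⟨⟨?_, ?_⟩, hord⟩
  · intro i j h
    exact le_antisymm ((hord i j).2 (le_of_eq h)) ((hord j i).2 (le_of_eq h.symm))
  · rintro ⟨g, hg, h0, h1⟩
    -- minimal element of I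
    set m0 := (Finset.univ : Finset I).min' Finset.univ_nonempty with hm0
    have hthreshm0 : thresh m0 = constOne I := by
      ext x
      simp [thresh, constOne, hm0, Finset.min'_le _ x (Finset.mem_univ x)]
    have hS : g (thresh m0) = 1 := by rw [hthreshm0]; exact h1
    set S := Finset.univ.filter (fun i : I => g (thresh i) = 1) with hSdef
    have hSne : S.Nonempty := ⟨m0, by simp [hSdef, hS]⟩
    set i := S.max' hSne with hi
    have hiS : g (thresh i) = 1 := (Finset.mem_filter.1 (S.max'_mem hSne)).2
    refine ⟨i, ?_⟩
    apply Subtype.ext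
    funext f
    show f i = g f
    rcases fin2_cases (f i) with hfi | hfi
    · -- f i = 0, show g f = 0
      rw [hfi]
      by_cases hT : ∃ x, f x = 1
      · obtain ⟨x0, hx0⟩ := hT
        set T := Finset.univ.filter (fun x : I => f x = 1) with hTdef
        have hTne : T.Nonempty := ⟨x0, by simp [hTdef, hx0]⟩
        set m := T.min' hTne with hm
        have hfm : f m = 1 := (Finset.mem_filter.1 (T.min'_mem hTne)).2
        have hfeq : f = thresh m := by
          ext x
          by_cases hmx : m ≤ x
          · have : (1 : Fin 2) ≤ f x := hfm ▸ f.monotone hmx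
            have : f x = 1 := le_antisymm (fin2_le_one _) this
            simp [thresh, hmx, this]
          · rcases fin2_cases (f x) with h | h
            · simp [thresh, hmx, h]
            · exact absurd (T.min'_le x (by simp [hTdef, h])) hmx
        have him : i < m := by
          by_contra hc
          have hmi : m ≤ i := not_lt.1 hc
          have : (1 : Fin 2) ≤ f i := hfm ▸ f.monotone hmi
          omega
        have hmnotS : g (thresh m) ≠ 1 := by
          intro hc
          have hmS : m ∈ S := by simp [hSdef, hc]
          exact absurd (S.le_max' m hmS) (not_le_of_gt him)
        rw [hfeq]
        rcases fin2_cases (g (thresh m)) with h | h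
        · exact h.symm
        · exact absurd h hmnotS
      · push_neg at hT
        have : f = constZero I := by
          ext x
          rcases fin2_cases (f x) with h | h
          · simp [constZero, h]
          · exact absurd h (hT x)
        rw [this, h0]
    · -- f i = 1, show g f = 1
      rw [hfi]
      have hle : thresh i ≤ f := by
        intro x
        by_cases h : i ≤ x
        · have : (1 : Fin 2) ≤ f x := hfi ▸ f.monotone h
          simp [thresh, h]
          omega
        · simp [thresh, h]
      have := hg hle
      rw [hiS] at this
      exact (le_antisymm (fin2_le_one _) this).symm
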